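/- Let p be an odd prime, φ the quadratic character of F_p, and χ any multiplicative character of F_p (including the trivial one). Then g(φχ)·g(χ⁻¹)/g(φ) = Σ_{t=2}^{p-1} χ(-t)·φ(t(t-1)), where the sum is over t ∈ F_p with t ≠ 0, 1, and g denotes the Gauss sum. -/

import Mathlib

open Finset

theorem stmt_5 (p : ℕ) [Fact p.Prime] (hp : Odd p)
    (ζ : ℂ) (hζ : IsPrimitiveRoot ζ p)
    (χ : MulChar (ZMod p) ℂ) :
    letI φ : MulChar (ZMod p) ℂ := (quadraticChar (ZMod p)).ringHomComp (Int.castRingHom ℂ)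
    (∑ x : ZMod p, (φ * χ) x * ζ ^ x.val) * (∑ x : ZMod p, χ⁻¹ x * ζ ^ x.val)
        / (∑ x : ZMod p, φ x * ζ ^ x.val)
      = ∑ t ∈ univ.filter (fun t : ZMod p => t ≠ 0 ∧ t ≠ 1),
          χ (-t) * φ (t * (t - 1)) := by
  set φ : MulChar (ZMod p) ℂ := (quadraticChar (ZMod p)).ringHomComp (Int.castRingHom ℂ) with hφdef
  have hp2 : p ≠ 2 := by rintro rfl; exact (by norm_num : ¬ Odd 2) hp
  have hchar2 : ringChar (ZMod p) ≠ 2 := by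
    rw [ZMod.ringChar_zmod_n]; exact hp2
  have hφ1 : φ ≠ 1 := by
    rw [MulChar.ringHomComp_ne_one_iff (RingHom.injective_int _)]
    exact quadraticChar_ne_one hchar2
  -- additive character
  have hζp : ζ ^ p = 1 := ((IsPrimitiveRoot.iff_def ζ p).mp hζ).left
  set ψ : AddChar (ZMod p) ℂ := AddChar.zmodChar p hζp with hψ
  have hψprim : ψ.IsPrimitive := AddChar.zmodChar_primitive_of_primitive_root p hζ
  have hgs : ∀ χ' : MulChar (ZMod p) ℂ,
      (∑ x : ZMod p, χ' x * ζ ^ x.val) = gaussSum χ' ψ := by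
    intro χ'
    simp [gaussSum, hψ, AddChar.zmodChar_apply]
  rw [hgs, hgs, hgs]
  have hcard : ((Fintype.card (ZMod p) : ℂ)) ≠ 0 := by
    simp [ZMod.card]
    exact_mod_cast (Fact.out : p.Prime).ne_zero
  have hmul : (φ * χ) * χ⁻¹ = φ := by
    rw [mul_assoc, mul_inv_cancel, mul_one]
  have hne : (φ * χ) * χ⁻¹ ≠ 1 := by rw [hmul]; exact hφ1
  have key := jacobiSum_eq_gaussSum_mul_gaussSum_div_gaussSum hcard hne hψprim
  rw [hmul] at key
  rw [← key]
  -- Now compute the Jacobi sum via the substitution t ↦ t / (t - 1)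
  rw [jacobiSum_eq_sum_sdiff]
  refine (Finset.sum_nbij' (fun t : ZMod p => t / (t - 1))
      (fun t : ZMod p => t / (t - 1)) ?_ ?_ ?_ ?_ ?_).symm
  · intro t ht
    simp only [mem_filter, mem_univ, true_and] at ht
    obtain ⟨ht0, ht1⟩ := ht
    have h1 : t - 1 ≠ 0 := sub_ne_zero.mpr ht1
    have hx0 : t / (t - 1) ≠ 0 := div_ne_zero ht0 h1
    have hx1 : t / (t - 1) ≠ 1 := by
      intro h
      have := (div_eq_one_iff_eq h1).mp h
      have h10 : (1 : ZMod p) = 0 := by linear_combination this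
      exact one_ne_zero h10
    simp [hx0, hx1]
  · intro t ht
    simp only [mem_sdiff, mem_univ, true_and, mem_insert, mem_singleton, not_or] at ht
    obtain ⟨ht0, ht1⟩ := ht
    have h1 : t - 1 ≠ 0 := sub_ne_zero.mpr ht1
    have hx0 : t / (t - 1) ≠ 0 := div_ne_zero ht0 h1
    have hx1 : t / (t - 1) ≠ 1 := by
      intro h
      have := (div_eq_one_iff_eq h1).mp h
      have h10 : (1 : ZMod p) = 0 := by linear_combination this
      exact one_ne_zero h10
    simp [hx0, hx1]
  · intro t ht
    simp only [mem_filter, mem_univ, true_and] at ht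
    have h1 : t - 1 ≠ 0 := sub_ne_zero.mpr ht.2
    field_simp; ring
  · intro t ht
    simp only [mem_sdiff, mem_univ, true_and, mem_insert, mem_singleton, not_or] at ht
    have h1 : t - 1 ≠ 0 := sub_ne_zero.mpr ht.2
    field_simp; ring
  · intro t ht
    simp only [mem_filter, mem_univ, true_and] at ht
    obtain ⟨ht0, ht1⟩ := ht
    have h1 : t - 1 ≠ 0 := sub_ne_zero.mpr ht1
    set x := t / (t - 1) with hxdef
    have hx : (1 : ZMod p) - x = -(t - 1)⁻¹ := by
      rw [hxdef]; field_simp; ring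
    have hχ : χ⁻¹ (1 - x) = χ (-(t - 1)) := by
      rw [MulChar.inv_apply', hx]
      congr 1
      field_simp
    have hχx : χ x * χ (-(t - 1)) = χ (-t) := by
      rw [← map_mul]
      congr 1
      rw [hxdef]; field_simp
    have hφx : φ x = φ (t * (t - 1)) := by
      have : x = t * (t - 1) * ((t - 1)⁻¹) ^ 2 := by
        rw [hxdef]; field_simp
      rw [this, map_mul]
      have hinv : (t - 1)⁻¹ ≠ 0 := inv_ne_zero h1
      have : φ (((t - 1)⁻¹) ^ 2) = 1 := by
        show ((quadraticChar (ZMod p) (((t - 1)⁻¹) ^ 2) : ℤ) : ℂ) = 1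
        rw [quadraticChar_sq_one' hinv]
        norm_num
      rw [this, mul_one]
    calc χ (-t) * φ (t * (t - 1))
        = φ x * (χ x * χ (-(t - 1))) := by rw [hχx, hφx]; ring
      _ = (φ * χ) x * χ⁻¹ (1 - x) := by rw [hχ, MulChar.mul_apply]; ring
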